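/- Let S, X, Y form a Markov chain S ↔ X ↔ Y on finite alphabets and let d(s,y) be the log-loss −log P_y(s) where each y encodes a distribution P_y on the S-alphabet. If additionally S is a deterministic function of X (i.e., H(S|X) = 0), then for every D ∈ [0, H(S)], the indirect rate-distortion function satisfies R(D) ≥ H(S) − D, where R(D) = min{ I(X;Y) : E[d̄(X,Y)] ≤ D } and d̄(x,y) = E[d(S,y)|X=x]. -/

import Mathlib

open BigOperators

/-- A conditional distribution (channel) on finite alphabets. -/
def IsChannel {𝒳 𝒴 : Type*} [Fintype 𝒴] (W : 𝒳 → 𝒴 → ℝ) : Prop :=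
  (∀ x y, 0 ≤ W x y) ∧ ∀ x, ∑ y, W x y = 1

/-- Mutual information `I(X;Y)` for input distribution `p` and channel `W`. -/
noncomputable def mutualInfoFin {𝒳 𝒴 : Type*} [Fintype 𝒳] [Fintype 𝒴]
    (p : 𝒳 → ℝ) (W : 𝒳 → 𝒴 → ℝ) : ℝ :=
  ∑ x, ∑ y, p x * W x y * Real.log (W x y / (∑ x', p x' * W x' y))

/-- Shannon entropy of a distribution on a finite alphabet. -/
noncomputable def entropyFin {𝒮 : Type*} [Fintype 𝒮] (q : 𝒮 → ℝ) : ℝ :=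
  -∑ s, q s * Real.log (q s)

private lemma sub_le_mul_log (a b : ℝ) (ha : 0 ≤ a) (hb : 0 ≤ b)
    (h : 0 < a → 0 < b) : a - b ≤ a * Real.log (a / b) := by
  rcases eq_or_lt_of_le ha with h0 | ha'
  · simp [← h0]; exact hb
  · have hb' := h ha'
    have h1 : Real.log (b / a) ≤ b / a - 1 := Real.log_le_sub_one_of_pos (by positivity)
    have h2 : Real.log (a / b) = - Real.log (b / a) := by
      rw [← Real.log_inv]
      congr 1
      field_simp
    rw [h2]
    have h3 : b / a - 1 = (b - a) / a := by field_simp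
    rw [h3] at h1
    have h4 : -((b - a) / a) ≤ -Real.log (b / a) := by linarith
    calc a - b = a * (-((b - a) / a)) := by field_simp; ring
      _ ≤ a * (-Real.log (b / a)) := mul_le_mul_of_nonneg_left h4 ha

/-- indirect RDF lower bound under log-loss with a deterministic label.
`S = f(X)`, reproductions `y` encode positive distributions `ρ y` on the `S`-alphabet,
`d(s,y) = −log (ρ y s)`, so the reduced distortion is `d̄(x,y) = −log (ρ y (f x))`.
Then for every `D ∈ [0, H(S)]`,
`R(D) = min { I(X;Y) : E[d̄(X,Y)] ≤ D } ≥ H(S) − D`. -/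
theorem indirect_rdf_logloss_lower_bound
    {𝒳 𝒮 𝒴 : Type*} [Fintype 𝒳] [Fintype 𝒮] [Fintype 𝒴] [DecidableEq 𝒮]
    [Nonempty 𝒳] [Nonempty 𝒮] [Nonempty 𝒴]
    (p : 𝒳 → ℝ) (hp0 : ∀ x, 0 ≤ p x) (hp1 : ∑ x, p x = 1)
    (f : 𝒳 → 𝒮)
    (ρ : 𝒴 → 𝒮 → ℝ) (hρ0 : ∀ y s, 0 < ρ y s) (hρ1 : ∀ y, ∑ s, ρ y s = 1)
    (D : ℝ)
    (hD : D ∈ Set.Icc 0 (entropyFin (fun s => ∑ x ∈ Finset.univ.filter (fun x => f x = s), p x)))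
    (hfeas : ∃ W : 𝒳 → 𝒴 → ℝ, IsChannel W ∧
      ∑ x, ∑ y, p x * W x y * (-Real.log (ρ y (f x))) ≤ D) :
    entropyFin (fun s => ∑ x ∈ Finset.univ.filter (fun x => f x = s), p x) - D
      ≤ sInf {r | ∃ W : 𝒳 → 𝒴 → ℝ, IsChannel W ∧
          (∑ x, ∑ y, p x * W x y * (-Real.log (ρ y (f x))) ≤ D) ∧
          r = mutualInfoFin p W} := by
  classical
  set q : 𝒮 → ℝ := fun s => ∑ x ∈ Finset.univ.filter (fun x => f x = s), p x with hqdef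
  have hq0 : ∀ s, 0 ≤ q s := fun s => Finset.sum_nonneg (fun x _ => hp0 x)
  have hqf : ∀ x, p x ≤ q (f x) := by
    intro x
    exact Finset.single_le_sum (fun i _ => hp0 i) (by simp)
  apply le_csInf
  · obtain ⟨W, hW, hd⟩ := hfeas
    exact ⟨mutualInfoFin p W, W, hW, hd, rfl⟩
  rintro r ⟨W, ⟨hW0, hW1⟩, hd, rfl⟩
  set P : 𝒴 → ℝ := fun y => ∑ x', p x' * W x' y with hPdef
  have hP0 : ∀ y, 0 ≤ P y := fun y => Finset.sum_nonneg fun x _ => mul_nonneg (hp0 x) (hW0 x y)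
  set ν : 𝒳 → 𝒴 → ℝ := fun x y => P y * ρ y (f x) * (p x / q (f x)) with hνdef
  have hν0 : ∀ x y, 0 ≤ ν x y := by
    intro x y
    exact mul_nonneg (mul_nonneg (hP0 y) (hρ0 y (f x)).le) (div_nonneg (hp0 x) (hq0 _))
  -- pointwise key inequality
  have key : ∀ x y, p x * W x y - ν x y ≤
      p x * W x y * Real.log (W x y / P y)
      + p x * W x y * (-Real.log (ρ y (f x)))
      + p x * W x y * Real.log (q (f x)) := by
    intro x y
    rcases eq_or_lt_of_le (mul_nonneg (hp0 x) (hW0 x y)) with h0 | hpos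
    · rw [← h0]; simp; linarith [hν0 x y]
    · have hpx : 0 < p x := by
        rcases mul_pos_iff.mp hpos with ⟨h, _⟩ | ⟨h, _⟩
        · exact h
        · exact absurd h (not_lt.mpr (hp0 x))
      have hWxy : 0 < W x y := by
        rcases mul_pos_iff.mp hpos with ⟨_, h⟩ | ⟨_, h⟩
        · exact h
        · exact absurd h (not_lt.mpr (hW0 x y))
      have hqx : 0 < q (f x) := lt_of_lt_of_le hpx (hqf x)
      have hPy : 0 < P y := by
        have : p x * W x y ≤ P y :=
          Finset.single_le_sum (fun i _ => mul_nonneg (hp0 i) (hW0 i y)) (Finset.mem_univ x)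
        linarith
      have hρxy := hρ0 y (f x)
      have hνpos : 0 < ν x y := by
        rw [hνdef]; positivity
      have hkl := sub_le_mul_log (p x * W x y) (ν x y) hpos.le (hν0 x y) (fun _ => hνpos)
      have hratio : (p x * W x y) / ν x y = W x y * q (f x) / (P y * ρ y (f x)) := by
        rw [hνdef]
        field_simp
      rw [hratio] at hkl
      have hlog : Real.log (W x y * q (f x) / (P y * ρ y (f x)))
          = Real.log (W x y / P y) + (-Real.log (ρ y (f x))) + Real.log (q (f x)) := by
        rw [Real.log_div (by positivity) (by positivity),
            Real.log_mul (ne_of_gt hWxy) (ne_of_gt hqx),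
            Real.log_mul (ne_of_gt hPy) (ne_of_gt hρxy),
            Real.log_div (ne_of_gt hWxy) (ne_of_gt hPy)]
        ring
      rw [hlog] at hkl
      calc p x * W x y - ν x y
          ≤ p x * W x y * (Real.log (W x y / P y) + (-Real.log (ρ y (f x)))
              + Real.log (q (f x))) := hkl
        _ = p x * W x y * Real.log (W x y / P y)
            + p x * W x y * (-Real.log (ρ y (f x)))
            + p x * W x y * Real.log (q (f x)) := by ring
  -- sum of μ is 1
  have hsumμ : ∑ x, ∑ y, p x * W x y = 1 := by
    rw [← hp1]
    apply Finset.sum_congr rfl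
    intro x _
    rw [← Finset.mul_sum, hW1 x, mul_one]
  -- sum of ν is ≤ 1
  have hsumν : ∑ x, ∑ y, ν x y ≤ 1 := by
    rw [Finset.sum_comm]
    have hPsum : ∑ y, P y = 1 := by
      rw [hPdef]
      rw [Finset.sum_comm]
      exact hsumμ
    calc ∑ y, ∑ x, ν x y
        = ∑ y, P y * ∑ x, ρ y (f x) * (p x / q (f x)) := by
          apply Finset.sum_congr rfl
          intro y _
          rw [Finset.mul_sum]
          apply Finset.sum_congr rfl
          intro x _
          rw [hνdef]; ring
      _ ≤ ∑ y, P y * 1 := by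
          apply Finset.sum_le_sum
          intro y _
          apply mul_le_mul_of_nonneg_left _ (hP0 y)
          have hfib : ∑ x, ρ y (f x) * (p x / q (f x))
              = ∑ s, ∑ x ∈ Finset.univ.filter (fun x => f x = s),
                  ρ y (f x) * (p x / q (f x)) := by
            rw [Finset.sum_fiberwise_eq_sum_filter Finset.univ Finset.univ f
                  (fun x => ρ y (f x) * (p x / q (f x)))]
            simp
          rw [hfib]
          have hstep : ∀ s ∈ Finset.univ, ∑ x ∈ Finset.univ.filter (fun x => f x = s),
              ρ y (f x) * (p x / q (f x)) = ρ y s * (q s / q s) := by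
            intro s _
            have h1 : ∑ x ∈ Finset.univ.filter (fun x => f x = s),
                ρ y (f x) * (p x / q (f x))
                = ∑ x ∈ Finset.univ.filter (fun x => f x = s), ρ y s * (p x / q s) := by
              apply Finset.sum_congr rfl
              intro x hx
              rw [(Finset.mem_filter.mp hx).2]
            rw [h1, ← Finset.mul_sum, ← Finset.sum_div]
          rw [Finset.sum_congr rfl hstep]
          calc ∑ s, ρ y s * (q s / q s) ≤ ∑ s, ρ y s := by
                apply Finset.sum_le_sum
                intro s _
                rcases eq_or_lt_of_le (hq0 s) with h | h
                · rw [← h]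
                  simp [(hρ0 y s).le]
                · rw [div_self (ne_of_gt h), mul_one]
            _ = 1 := hρ1 y
      _ = 1 := by simpa using hPsum
  -- identify the log q term with minus the entropy
  have hT : ∑ x, ∑ y, p x * W x y * Real.log (q (f x)) = -entropyFin q := by
    have h1 : ∀ x, ∑ y, p x * W x y * Real.log (q (f x))
        = p x * Real.log (q (f x)) := by
      intro x
      have : ∀ y ∈ Finset.univ, p x * W x y * Real.log (q (f x))
          = W x y * (p x * Real.log (q (f x))) := by
        intro y _; ring
      rw [Finset.sum_congr rfl this, ← Finset.sum_mul, hW1 x, one_mul]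
    rw [Finset.sum_congr rfl (fun x _ => h1 x)]
    have h2 : ∑ x, p x * Real.log (q (f x))
        = ∑ s, ∑ x ∈ Finset.univ.filter (fun x => f x = s),
            p x * Real.log (q (f x)) := by
      rw [Finset.sum_fiberwise_eq_sum_filter Finset.univ Finset.univ f
            (fun x => p x * Real.log (q (f x)))]
      simp
    rw [h2]
    have h3 : ∀ s ∈ Finset.univ, ∑ x ∈ Finset.univ.filter (fun x => f x = s),
        p x * Real.log (q (f x)) = q s * Real.log (q s) := by
      intro s _
      have : ∑ x ∈ Finset.univ.filter (fun x => f x = s), p x * Real.log (q (f x))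
          = ∑ x ∈ Finset.univ.filter (fun x => f x = s), p x * Real.log (q s) := by
        apply Finset.sum_congr rfl
        intro x hx
        rw [(Finset.mem_filter.mp hx).2]
      rw [this, ← Finset.sum_mul]
    rw [Finset.sum_congr rfl h3, entropyFin, neg_neg]
  -- sum the key inequality
  have hsum : (∑ x, ∑ y, p x * W x y) - (∑ x, ∑ y, ν x y)
      ≤ mutualInfoFin p W
        + (∑ x, ∑ y, p x * W x y * (-Real.log (ρ y (f x))))
        + (∑ x, ∑ y, p x * W x y * Real.log (q (f x))) := by
    have hMI : mutualInfoFin p W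
        = ∑ x, ∑ y, p x * W x y * Real.log (W x y / P y) := rfl
    rw [hMI, ← Finset.sum_add_distrib, ← Finset.sum_add_distrib, ← Finset.sum_sub_distrib]
    apply Finset.sum_le_sum
    intro x _
    rw [← Finset.sum_add_distrib, ← Finset.sum_add_distrib, ← Finset.sum_sub_distrib]
    exact Finset.sum_le_sum (fun y _ => key x y)
  rw [hsumμ, hT] at hsum
  have hfinal : entropyFin q ≤ mutualInfoFin p W + D := by
    have h5 : (0:ℝ) ≤ 1 - ∑ x, ∑ y, ν x y := by linarith
    linarith
  linarith
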